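/- arXiv:1510.03395 — 2 statements merged into one kernel-verified Lean document; each statement's English description precedes it below -/
import Mathlib

section
/- In an inverse semiloopoid G over M, for every g ∈ G one has α(g⁻¹) = β(g) and β(g⁻¹) = α(g). -/
/-- A semiloopoid over a set of units `M ⊆ G`: maps `α, β : G → M ⊆ G` fixing
units, a set `G₂` of composable pairs, and a partial multiplication `m : G₂ → G`
such that `α(g)g = g`, `gβ(g) = g`, and all left and right translations are
injective on their domains. -/
structure Semiloopoid (G : Type*) where
  M : Set G
  α : G → G
  β : G → G
  α_mem : ∀ g : G, α g ∈ M
  β_mem : ∀ g : G, β g ∈ M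
  α_unit : ∀ u ∈ M, α u = u
  β_unit : ∀ u ∈ M, β u = u
  G₂ : Set (G × G)
  mul : (g : G) → (h : G) → (g, h) ∈ G₂ → G
  unit_left_comp : ∀ g : G, (α g, g) ∈ G₂
  unit_left : ∀ g : G, mul (α g) g (unit_left_comp g) = g
  unit_right_comp : ∀ g : G, (g, β g) ∈ G₂
  unit_right : ∀ g : G, mul g (β g) (unit_right_comp g) = g
  left_inj : ∀ (g h h' : G) (p : (g, h) ∈ G₂) (p' : (g, h') ∈ G₂),
    mul g h p = mul g h' p' → h = h'
  right_inj : ∀ (g h h' : G) (p : (h, g) ∈ G₂) (p' : (h', g) ∈ G₂),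
    mul h g p = mul h' g p' → h = h'

/-- An inverse semiloopoid: a semiloopoid with an inversion `ι(g) = g⁻¹` such
that whenever `(g,h) ∈ G₂` also `(g⁻¹, gh) ∈ G₂` with `g⁻¹(gh) = h`, and
whenever `(u,g) ∈ G₂` also `(ug, g⁻¹) ∈ G₂` with `(ug)g⁻¹ = u`. -/
structure InverseSemiloopoid (G : Type*) extends Semiloopoid G where
  inv : G → G
  inv_left_comp : ∀ (g h : G) (p : (g, h) ∈ G₂), (inv g, mul g h p) ∈ G₂
  inv_left : ∀ (g h : G) (p : (g, h) ∈ G₂),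
    mul (inv g) (mul g h p) (inv_left_comp g h p) = h
  inv_right_comp : ∀ (u g : G) (p : (u, g) ∈ G₂), (mul u g p, inv g) ∈ G₂
  inv_right : ∀ (u g : G) (p : (u, g) ∈ G₂),
    mul (mul u g p) (inv g) (inv_right_comp u g p) = u

private lemma Semiloopoid.mul_congr_right {G : Type*} (S : Semiloopoid G) {g h h' : G}
    (e : h = h') (p : (g, h) ∈ S.G₂) (p' : (g, h') ∈ S.G₂) :
    S.mul g h p = S.mul g h' p' := by subst e; rfl

private lemma Semiloopoid.mul_congr_left {G : Type*} (S : Semiloopoid G) {g h h' : G}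
    (e : h = h') (p : (h, g) ∈ S.G₂) (p' : (h', g) ∈ S.G₂) :
    S.mul h g p = S.mul h' g p' := by subst e; rfl

/-- In an inverse semiloopoid `G` over `M`, for every `g ∈ G` one has
`α(g⁻¹) = β(g)` and `β(g⁻¹) = α(g)`. -/
theorem inverseSemiloopoid_α_inv_β_inv {G : Type*}
    (S : InverseSemiloopoid G) (g : G) :
    S.α (S.inv g) = S.β g ∧ S.β (S.inv g) = S.α g := by
  -- Part 1: α(g⁻¹) = β g
  have p1 := S.unit_right_comp g
  have e1 : S.mul g (S.β g) p1 = g := S.unit_right g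
  have c2 := S.inv_left_comp g (S.β g) p1
  have e2 := S.inv_left g (S.β g) p1
  have c2' : (S.inv g, g) ∈ S.G₂ := by rw [e1] at c2; exact c2
  have e2' : S.mul (S.inv g) g c2' = S.β g :=
    (S.toSemiloopoid.mul_congr_right e1.symm c2' c2).trans e2
  have c4 := S.inv_right_comp (S.inv g) g c2'
  have e4 := S.inv_right (S.inv g) g c2'
  have c4' : (S.β g, S.inv g) ∈ S.G₂ := by rw [e2'] at c4; exact c4
  have e4' : S.mul (S.β g) (S.inv g) c4' = S.inv g :=
    (S.toSemiloopoid.mul_congr_left e2'.symm c4' c4).trans e4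
  have hα : S.α (S.inv g) = S.β g := by
    refine S.right_inj (S.inv g) _ _ (S.unit_left_comp (S.inv g)) c4' ?_
    rw [S.unit_left (S.inv g), e4']
  -- Part 2: β(g⁻¹) = α g
  have p0 := S.unit_left_comp g
  have e0 : S.mul (S.α g) g p0 = g := S.unit_left g
  have c3 := S.inv_right_comp (S.α g) g p0
  have e3 := S.inv_right (S.α g) g p0
  have c3' : (g, S.inv g) ∈ S.G₂ := by rw [e0] at c3; exact c3
  have e3' : S.mul g (S.inv g) c3' = S.α g :=
    (S.toSemiloopoid.mul_congr_left e0.symm c3' c3).trans e3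
  have c5 := S.inv_left_comp g (S.inv g) c3'
  have e5 := S.inv_left g (S.inv g) c3'
  have c5' : (S.inv g, S.α g) ∈ S.G₂ := by rw [e3'] at c5; exact c5
  have e5' : S.mul (S.inv g) (S.α g) c5' = S.inv g :=
    (S.toSemiloopoid.mul_congr_right e3'.symm c5' c5).trans e5
  have hβ : S.β (S.inv g) = S.α g := by
    refine S.left_inj (S.inv g) _ _ (S.unit_right_comp (S.inv g)) c5' ?_
    rw [S.unit_right (S.inv g), e5']
  exact ⟨hα, hβ⟩
end

section
/- Let G be a loopoid over M and u ∈ M. Then the isotropy set G_u = {g ∈ G : α(g) = β(g) = u} carries a loop structure induced by the multiplication of G: every pair (g,h) ∈ G_u × G_u is composable with gh ∈ G_u; u ∈ G_u and ug = g = gu for all g ∈ G_u; and for every g ∈ G_u the maps h ↦ gh and h ↦ hg are bijections of G_u onto itself. -/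
/-- A loopoid over `M`: a semiloopoid such that `G₂ = {(g,h) : β(g) = α(h)}`,
`α(gh) = α(g)`, `β(gh) = β(h)`, and left (resp. right) translations are
bijections between the corresponding `α`-fibres (resp. `β`-fibres);
surjectivity is recorded below, injectivity being part of the semiloopoid
structure. -/
structure Loopoid (G : Type*) extends Semiloopoid G where
  comp_iff : ∀ g h : G, (g, h) ∈ G₂ ↔ β g = α h
  α_mul : ∀ (g h : G) (p : (g, h) ∈ G₂), α (mul g h p) = α g
  β_mul : ∀ (g h : G) (p : (g, h) ∈ G₂), β (mul g h p) = β h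
  left_surj : ∀ g k : G, α k = α g → ∃ (h : G) (p : (g, h) ∈ G₂), mul g h p = k
  right_surj : ∀ g k : G, β k = β g → ∃ (h : G) (p : (h, g) ∈ G₂), mul h g p = k


private lemma mul_congr {G : Type*} (L : Semiloopoid G) {g h g' h' : G}
    (eg : g = g') (eh : h = h') (p : (g, h) ∈ L.G₂) (p' : (g', h') ∈ L.G₂) :
    L.mul g h p = L.mul g' h' p' := by subst eg; subst eh; rfl

/-- Let `G` be a loopoid over `M` and `u ∈ M`. Then the isotropy set
`G_u = {g : α(g) = β(g) = u}` carries a loop structure induced by the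
multiplication of `G`: every pair of elements of `G_u` is composable with
product in `G_u`; `u ∈ G_u` is a two-sided unit; and for every `g ∈ G_u` the
left and right translations by `g` are bijections of `G_u` onto itself. -/
theorem loopoid_isotropy_loop {G : Type*} (L : Loopoid G) (u : G) (hu : u ∈ L.M) :
    -- G_u is closed under the (everywhere defined) multiplication
    (∀ g h : G, (L.α g = u ∧ L.β g = u) → (L.α h = u ∧ L.β h = u) →
      ∃ p : (g, h) ∈ L.G₂, L.α (L.mul g h p) = u ∧ L.β (L.mul g h p) = u) ∧
    -- u belongs to G_u and is a two-sided unit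
    (L.α u = u ∧ L.β u = u) ∧
    (∀ g : G, (L.α g = u ∧ L.β g = u) →
      ∃ (p : (u, g) ∈ L.G₂) (q : (g, u) ∈ L.G₂),
        L.mul u g p = g ∧ L.mul g u q = g) ∧
    -- left translations are bijections of G_u
    (∀ g : G, (L.α g = u ∧ L.β g = u) →
      (∀ h h' : G, (L.α h = u ∧ L.β h = u) → (L.α h' = u ∧ L.β h' = u) →
        ∀ (p : (g, h) ∈ L.G₂) (p' : (g, h') ∈ L.G₂),
          L.mul g h p = L.mul g h' p' → h = h') ∧
      (∀ k : G, (L.α k = u ∧ L.β k = u) →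
        ∃ h : G, (L.α h = u ∧ L.β h = u) ∧
          ∃ p : (g, h) ∈ L.G₂, L.mul g h p = k)) ∧
    -- right translations are bijections of G_u
    (∀ g : G, (L.α g = u ∧ L.β g = u) →
      (∀ h h' : G, (L.α h = u ∧ L.β h = u) → (L.α h' = u ∧ L.β h' = u) →
        ∀ (p : (h, g) ∈ L.G₂) (p' : (h', g) ∈ L.G₂),
          L.mul h g p = L.mul h' g p' → h = h') ∧
      (∀ k : G, (L.α k = u ∧ L.β k = u) →
        ∃ h : G, (L.α h = u ∧ L.β h = u) ∧
          ∃ p : (h, g) ∈ L.G₂, L.mul h g p = k)) := by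

  refine ⟨?_, ⟨L.α_unit u hu, L.β_unit u hu⟩, ?_, ?_, ?_⟩
  · rintro g h ⟨hga, hgb⟩ ⟨hha, hhb⟩
    have p : (g, h) ∈ L.G₂ := (L.comp_iff g h).2 (by rw [hgb, hha])
    exact ⟨p, by rw [L.α_mul g h p, hga], by rw [L.β_mul g h p, hhb]⟩
  · rintro g ⟨hga, hgb⟩
    have p : (u, g) ∈ L.G₂ := (L.comp_iff u g).2 (by rw [L.β_unit u hu, hga])
    have q : (g, u) ∈ L.G₂ := (L.comp_iff g u).2 (by rw [hgb, L.α_unit u hu])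
    refine ⟨p, q, ?_, ?_⟩
    · exact (mul_congr L.toSemiloopoid hga.symm rfl p (L.unit_left_comp g)).trans
        (L.unit_left g)
    · exact (mul_congr L.toSemiloopoid rfl hgb.symm q (L.unit_right_comp g)).trans
        (L.unit_right g)
  · rintro g ⟨hga, hgb⟩
    refine ⟨fun h h' _ _ p p' e => L.left_inj g h h' p p' e, ?_⟩
    rintro k ⟨hka, hkb⟩
    obtain ⟨h, p, e⟩ := L.left_surj g k (by rw [hka, hga])
    have hha : L.α h = u := by
      have := (L.comp_iff g h).1 p
      rw [← this, hgb]
    have hhb : L.β h = u := by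
      have := L.β_mul g h p
      rw [e, hkb] at this
      exact this.symm
    exact ⟨h, ⟨hha, hhb⟩, p, e⟩
  · rintro g ⟨hga, hgb⟩
    refine ⟨fun h h' _ _ p p' e => L.right_inj g h h' p p' e, ?_⟩
    rintro k ⟨hka, hkb⟩
    obtain ⟨h, p, e⟩ := L.right_surj g k (by rw [hkb, hgb])
    have hhb : L.β h = u := by
      have := (L.comp_iff h g).1 p
      rw [this, hga]
    have hha : L.α h = u := by
      have := L.α_mul h g p
      rw [e, hka] at this
      exact this.symm
    exact ⟨h, ⟨hha, hhb⟩, p, e⟩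
end
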